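/- Given a Kripke model on the m-th finite frame (K_m, ≽_m) and a node k not forcing a formula φ, the valuation ν that maps each atom p to the sequence which is the all-1 function at every index n ≠ m and at index m is the characteristic function of forcing p, satisfies ν(φ)_m(k) = 0; in particular ν(φ) is not the designated value (the sequence of all-1 functions). -/
import Mathlib


inductive Fm (α : Type) : Type where
  | top  : Fm α
  | atom : α → Fm α
  | neg  : Fm α → Fm α
  | and  : Fm α → Fm α → Fm α
  | or   : Fm α → Fm α → Fm α
  | imp  : Fm α → Fm α → Fm α

/-- An enumeration (Kₙ, ≽ₙ) of finite Kripke frames: partial orders on finite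
subsets of ℕ. -/
structure FrameSeq : Type where
  K : ℕ → Finset ℕ
  le : ℕ → ℕ → ℕ → Prop
  refl : ∀ n k, k ∈ K n → le n k k
  trans : ∀ n a b c, le n a b → le n b c → le n a c
  antisymm : ∀ n a b, le n a b → le n b a → a = b
  mem_left : ∀ n a b, le n a b → a ∈ K n
  mem_right : ∀ n a b, le n a b → b ∈ K n

/-- Membership in the set 𝒱 of values: sequences of monotone {0,1}-valued functions
on the frames, eventually constantly 1 or eventually constantly 0. -/
def memV (F : FrameSeq) (f : ℕ → ℕ → Bool) : Prop :=
  (∀ n a b, F.le n a b → f n a ≤ f n b) ∧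
  ∃ N : ℕ, (∀ n, N ≤ n → ∀ k, f n k = true) ∨ (∀ n, N ≤ n → ∀ k, f n k = false)

open Classical in
/-- The homomorphic extension of a valuation ν of the atoms to all formulas,
where the connectives act componentwise by the Kripke-style operations on
monotone functions. -/
noncomputable def evalV (F : FrameSeq) (ν : ℕ → ℕ → ℕ → Bool) : Fm ℕ → ℕ → ℕ → Bool
  | .top => fun _ _ => true
  | .atom p => ν p
  | .neg φ => fun n k =>
      if ∀ k', F.le n k k' → evalV F ν φ n k' = false then true else false
  | .and φ ψ => fun n k => evalV F ν φ n k && evalV F ν ψ n k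
  | .or φ ψ => fun n k => evalV F ν φ n k || evalV F ν ψ n k
  | .imp φ ψ => fun n k =>
      if ∀ k', F.le n k k' → evalV F ν φ n k' = true → evalV F ν ψ n k' = true
      then true else false

/-- Kripke forcing on the m-th frame for a Kripke model given by a persistent
atomic valuation `val`. -/
def forceAt (F : FrameSeq) (m : ℕ) (val : ℕ → ℕ → Prop) : ℕ → Fm ℕ → Prop
  | _, .top => True
  | k, .atom p => val k p
  | k, .neg φ => ∀ k', F.le m k k' → ¬ forceAt F m val k' φ
  | k, .and φ ψ => forceAt F m val k φ ∧ forceAt F m val k ψ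
  | k, .or φ ψ => forceAt F m val k φ ∨ forceAt F m val k ψ
  | k, .imp φ ψ => ∀ k', F.le m k k' → forceAt F m val k' φ → forceAt F m val k' ψ

open Classical in
/-- The valuation ν sending each atom p to the sequence which is the all-1
function at every index n ≠ m, and at index m is the characteristic function of
forcing p in the given model. -/
noncomputable def nuOf (F : FrameSeq) (m : ℕ) (val : ℕ → ℕ → Prop) :
    ℕ → ℕ → ℕ → Bool :=
  fun p n k => if n = m then (if val k p then true else false) else true

/-- If a node k of a Kripke model on the m-th frame does not force φ, then the
valuation `nuOf` takes values in 𝒱, gives ν(φ)ₘ(k) = 0, and in particular maps φ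
to a value different from the designated one (the sequence of all-1 functions). -/

lemma eval_iff (F : FrameSeq) (m : ℕ) (val : ℕ → ℕ → Prop)
    (hpers : ∀ k k' p, F.le m k k' → val k p → val k' p) :
    ∀ ψ : Fm ℕ, ∀ k, k ∈ F.K m →
      (evalV F (nuOf F m val) ψ m k = true ↔ forceAt F m val k ψ) := by
  intro ψ
  induction ψ with
  | top => intro k hk; simp [evalV, forceAt]
  | atom p =>
      intro k hk
      simp only [evalV, nuOf, forceAt, if_pos rfl]
      by_cases h : val k p <;> simp [h]
  | neg φ ih =>
      intro k hk
      simp only [evalV, forceAt]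
      split
      · next h =>
          constructor
          · intro _ k' hle hf
            have hk' := F.mem_right m k k' hle
            exact absurd ((ih k' hk').mpr hf) (by simp [h k' hle])
          · intro; rfl
      · next h =>
          push_neg at h
          obtain ⟨k', hle, hne⟩ := h
          have hk' := F.mem_right m k k' hle
          simp only [Bool.not_eq_false] at hne
          constructor
          · intro hc; exact absurd hc (by simp)
          · intro hf; exact absurd ((ih k' hk').mp hne) (hf k' hle)
  | and φ ψ ihφ ihψ =>
      intro k hk
      simp [evalV, forceAt, ihφ k hk, ihψ k hk]
  | or φ ψ ihφ ihψ =>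
      intro k hk
      simp [evalV, forceAt, ihφ k hk, ihψ k hk]
  | imp φ ψ ihφ ihψ =>
      intro k hk
      simp only [evalV, forceAt]
      split
      · next h =>
          constructor
          · intro _ k' hle hf
            have hk' := F.mem_right m k k' hle
            exact (ihψ k' hk').mp (h k' hle ((ihφ k' hk').mpr hf))
          · intro; rfl
      · next h =>
          push_neg at h
          obtain ⟨k', hle, hφt, hψf⟩ := h
          have hk' := F.mem_right m k k' hle
          constructor
          · intro hc; exact absurd hc (by simp)
          · intro hf
            have := (ihψ k' hk').mpr (hf k' hle ((ihφ k' hk').mp hφt))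
            simp [this] at hψf

theorem eval_of_countermodel (F : FrameSeq) (m : ℕ) (val : ℕ → ℕ → Prop)
    (hpers : ∀ k k' p, F.le m k k' → val k p → val k' p)
    (k : ℕ) (hk : k ∈ F.K m) (φ : Fm ℕ) (hkφ : ¬ forceAt F m val k φ) :
    (∀ p, memV F (nuOf F m val p)) ∧
    evalV F (nuOf F m val) φ m k = false ∧
    evalV F (nuOf F m val) φ ≠ (fun _ _ => true) := by
  refine ⟨?_, ?_, ?_⟩
  · intro p
    refine ⟨?_, m+1, Or.inl ?_⟩
    · intro n a b hle
      by_cases hn : n = m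
      · subst hn
        simp only [nuOf, if_pos rfl]
        by_cases ha : val a p
        · simp [ha, hpers a b p hle ha]
        · simp [ha]
      · simp [nuOf, hn]
    · intro n hn k'
      have : n ≠ m := by omega
      simp [nuOf, this]
  · have h := (eval_iff F m val hpers φ k hk)
    cases hE : evalV F (nuOf F m val) φ m k
    · rfl
    · exact absurd (h.mp hE) hkφ
  · intro h
    have h2 := (eval_iff F m val hpers φ k hk)
    have : evalV F (nuOf F m val) φ m k = true := by rw [h]
    exact hkφ (h2.mp this)
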